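/- arXiv:1306.0272 — 2 statements merged into one kernel-verified Lean document; each statement's English description precedes it below -/
import Mathlib

section
/- For n ≥ 1, t > 0 and x ∈ ℝⁿ, the Fourier integral (2π)^{-n/2} ∫_{ℝⁿ} e^{-t|ξ|} e^{i x·ξ} dξ equals (2^{n/2} Γ((n+1)/2)/√π) · t / (t² + |x|²)^{(n+1)/2}. -/
open MeasureTheory Real Set

noncomputable section PoissonAux

private lemma glasser_image {a : ℝ} (ha : 0 < a) :
    (fun v : ℝ => v - a / v) '' Ioi 0 = univ := by
  apply eq_univ_of_forall
  intro w
  have h4a : (0:ℝ) < w ^ 2 + 4 * a := by positivity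
  have hs : Real.sqrt (w ^ 2 + 4 * a) ^ 2 = w ^ 2 + 4 * a := Real.sq_sqrt h4a.le
  have hsnn : 0 ≤ Real.sqrt (w ^ 2 + 4 * a) := Real.sqrt_nonneg _
  set s := Real.sqrt (w ^ 2 + 4 * a) with hsdef
  have hv : 0 < (w + s) / 2 := by nlinarith
  refine ⟨(w + s) / 2, hv, ?_⟩
  have hvne : w + s ≠ 0 := by intro h; rw [h] at hv; simp at hv
  field_simp
  nlinarith

private lemma glasser_inj {a : ℝ} (ha : 0 < a) :
    InjOn (fun v : ℝ => v - a / v) (Ioi 0) := by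
  have : StrictMonoOn (fun v : ℝ => v - a / v) (Ioi 0) := by
    intro u hu v hv huv
    simp only [mem_Ioi] at hu hv
    have h1 : a / v ≤ a / u := div_le_div_of_nonneg_left ha.le hu huv.le
    simp only
    linarith
  exact this.injOn

private lemma glasser_deriv {a : ℝ} (v : ℝ) (hv : v ∈ Ioi (0:ℝ)) :
    HasDerivWithinAt (fun v : ℝ => v - a / v) (1 + a / v ^ 2) (Ioi 0) v := by
  have hv0 : v ≠ 0 := ne_of_gt hv
  have h := (hasDerivAt_id v).sub ((hasDerivAt_inv hv0).const_mul a)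
  have : (1 : ℝ) - a * (-(v ^ 2)⁻¹) = 1 + a / v ^ 2 := by field_simp; ring
  simpa [div_eq_mul_inv, this, Pi.sub_def] using h.hasDerivWithinAt

private lemma glasser_int {a : ℝ} (ha : 0 < a) :
    IntegrableOn (fun v : ℝ => (1 + a / v ^ 2) * Real.exp (-(v - a / v) ^ 2)) (Ioi 0) := by
  have h := (integrableOn_image_iff_integrableOn_abs_deriv_smul measurableSet_Ioi
    (glasser_deriv (a := a)) (glasser_inj ha) (fun w => Real.exp (-w ^ 2))).mp ?_
  · refine h.congr_fun (fun v hv => ?_) measurableSet_Ioi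
    have hv0 : (0:ℝ) < v := hv
    have hpos : (0:ℝ) < 1 + a / v ^ 2 := by positivity
    simp [abs_of_pos hpos, smul_eq_mul]
  · rw [glasser_image ha, integrableOn_univ]
    simpa using integrable_exp_neg_mul_sq (one_pos)

private lemma lemA {a : ℝ} (ha : 0 < a) :
    ∫ v in Ioi (0:ℝ), (1 + a / v ^ 2) * Real.exp (-(v - a / v) ^ 2) = Real.sqrt π := by
  have key := integral_image_eq_integral_abs_deriv_smul measurableSet_Ioi
    (glasser_deriv (a := a)) (glasser_inj ha) (fun w => Real.exp (-w ^ 2))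
  rw [glasser_image ha] at key
  have h1 : ∫ v in Ioi (0:ℝ), (1 + a / v ^ 2) * Real.exp (-(v - a / v) ^ 2)
      = ∫ v in Ioi (0:ℝ), |1 + a / v ^ 2| • Real.exp (-(v - a / v) ^ 2) := by
    refine setIntegral_congr_fun measurableSet_Ioi (fun v hv => ?_)
    have hv0 : (0:ℝ) < v := hv
    have hpos : (0:ℝ) < 1 + a / v ^ 2 := by positivity
    simp [abs_of_pos hpos, smul_eq_mul]
  rw [h1, ← key, setIntegral_univ]
  simpa using integral_gaussian 1

private lemma lemB {a : ℝ} (ha : 0 < a) :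
    ∫ v in Ioi (0:ℝ), (a / v ^ 2) * Real.exp (-(v - a / v) ^ 2)
      = ∫ v in Ioi (0:ℝ), Real.exp (-(v - a / v) ^ 2) := by
  have hderiv : ∀ v ∈ Ioi (0:ℝ),
      HasDerivWithinAt (fun v : ℝ => a / v) (-(a / v ^ 2)) (Ioi 0) v := by
    intro v hv
    have hv0 : v ≠ 0 := ne_of_gt hv
    have h := (hasDerivAt_inv hv0).const_mul a
    have : a * -(v ^ 2)⁻¹ = -(a / v ^ 2) := by field_simp
    simpa [div_eq_mul_inv, this] using h.hasDerivWithinAt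
  have hinj : InjOn (fun v : ℝ => a / v) (Ioi 0) := by
    intro u hu v hv huv
    have hu0 : (0:ℝ) < u := hu
    have hv0 : (0:ℝ) < v := hv
    have h : a / u = a / v := huv
    rw [div_eq_div_iff hu0.ne' hv0.ne'] at h
    exact (mul_left_cancel₀ ha.ne' h).symm
  have himg : (fun v : ℝ => a / v) '' Ioi 0 = Ioi 0 := by
    apply Subset.antisymm
    · rintro u ⟨v, hv, rfl⟩
      exact div_pos ha hv
    · intro u hu
      exact ⟨a / u, div_pos ha hu, by field_simp⟩
  have key := integral_image_eq_integral_abs_deriv_smul measurableSet_Ioi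
    hderiv hinj (fun u => Real.exp (-(u - a / u) ^ 2))
  rw [himg] at key
  rw [key]
  refine setIntegral_congr_fun measurableSet_Ioi (fun v hv => ?_)
  have hv0 : (0:ℝ) < v := hv
  have h1 : a / (a / v) = v := by field_simp
  have h2 : (a / v - v) ^ 2 = (v - a / v) ^ 2 := by ring
  have h3 : |(-(a / v ^ 2))| = a / v ^ 2 := by
    rw [abs_neg, abs_of_pos (by positivity)]
  simp only [h1, h2, h3, smul_eq_mul]

private lemma lemC {a : ℝ} (ha : 0 < a) :
    ∫ v in Ioi (0:ℝ), Real.exp (-(v - a / v) ^ 2) = Real.sqrt π / 2 := by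
  have hint1 := glasser_int ha
  have hmeas : AEStronglyMeasurable (fun v : ℝ => Real.exp (-(v - a / v) ^ 2))
      (volume.restrict (Ioi 0)) := by
    apply Measurable.aestronglyMeasurable
    fun_prop
  have hbound : ∀ᵐ v ∂(volume.restrict (Ioi (0:ℝ))),
      ‖Real.exp (-(v - a / v) ^ 2)‖ ≤ ‖(1 + a / v ^ 2) * Real.exp (-(v - a / v) ^ 2)‖ := by
    filter_upwards [ae_restrict_mem measurableSet_Ioi] with v hv
    have hv0 : (0:ℝ) < v := hv
    have h1 : (1:ℝ) ≤ 1 + a / v ^ 2 := le_add_of_nonneg_right (by positivity)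
    rw [Real.norm_eq_abs, Real.norm_eq_abs, abs_of_pos (Real.exp_pos _),
      abs_of_pos (by positivity)]
    nlinarith [Real.exp_pos (-(v - a / v) ^ 2)]
  have hint2 : IntegrableOn (fun v : ℝ => Real.exp (-(v - a / v) ^ 2)) (Ioi 0) :=
    Integrable.mono hint1 hmeas hbound
  have hmeas3 : AEStronglyMeasurable (fun v : ℝ => (a / v ^ 2) * Real.exp (-(v - a / v) ^ 2))
      (volume.restrict (Ioi 0)) := by
    apply Measurable.aestronglyMeasurable
    fun_prop
  have hbound3 : ∀ᵐ v ∂(volume.restrict (Ioi (0:ℝ))),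
      ‖(a / v ^ 2) * Real.exp (-(v - a / v) ^ 2)‖
        ≤ ‖(1 + a / v ^ 2) * Real.exp (-(v - a / v) ^ 2)‖ := by
    filter_upwards [ae_restrict_mem measurableSet_Ioi] with v hv
    have hv0 : (0:ℝ) < v := hv
    rw [Real.norm_eq_abs, Real.norm_eq_abs, abs_of_pos (by positivity),
      abs_of_pos (by positivity)]
    nlinarith [Real.exp_pos (-(v - a / v) ^ 2)]
  have hint3 : IntegrableOn (fun v : ℝ => (a / v ^ 2) * Real.exp (-(v - a / v) ^ 2)) (Ioi 0) :=
    Integrable.mono hint1 hmeas3 hbound3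
  have hsplit : ∫ v in Ioi (0:ℝ), (1 + a / v ^ 2) * Real.exp (-(v - a / v) ^ 2)
      = (∫ v in Ioi (0:ℝ), Real.exp (-(v - a / v) ^ 2))
        + ∫ v in Ioi (0:ℝ), (a / v ^ 2) * Real.exp (-(v - a / v) ^ 2) := by
    rw [← integral_add hint2 hint3]
    exact setIntegral_congr_fun measurableSet_Ioi (fun v _ => by ring)
  have h1 := lemA ha
  have h2 := lemB ha
  rw [hsplit, h2] at h1
  linarith

private lemma lemD {a : ℝ} (ha : 0 < a) :
    ∫ v in Ioi (0:ℝ), Real.exp (-v ^ 2 - a ^ 2 / v ^ 2)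
      = Real.sqrt π / 2 * Real.exp (-(2 * a)) := by
  have h : ∫ v in Ioi (0:ℝ), Real.exp (-v ^ 2 - a ^ 2 / v ^ 2)
      = ∫ v in Ioi (0:ℝ), Real.exp (-(2 * a)) * Real.exp (-(v - a / v) ^ 2) := by
    refine setIntegral_congr_fun measurableSet_Ioi (fun v hv => ?_)
    have hv0 : (0:ℝ) < v := hv
    rw [← Real.exp_add]
    congr 1
    field_simp
    ring
  rw [h, integral_const_mul, lemC ha]
  ring

/-- Subordination formula. -/
private lemma subordination {r : ℝ} (hr : 0 ≤ r) :
    ∫ s in Ioi (0:ℝ), s ^ (-(1:ℝ)/2) * Real.exp (-s - r ^ 2 / (4 * s))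
      = Real.sqrt π * Real.exp (-r) := by
  rcases eq_or_lt_of_le hr with hr0 | hr0
  · -- r = 0
    subst hr0
    have h : ∫ s in Ioi (0:ℝ), s ^ (-(1:ℝ)/2) * Real.exp (-s - (0:ℝ) ^ 2 / (4 * s))
        = ∫ s in Ioi (0:ℝ), Real.exp (-s) * s ^ ((1:ℝ)/2 - 1) := by
      refine setIntegral_congr_fun measurableSet_Ioi (fun s hs => ?_)
      norm_num [mul_comm]
    rw [h, ← Real.Gamma_eq_integral (by norm_num : (0:ℝ) < 1/2), Real.Gamma_one_half_eq]
    simp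
  · -- r > 0
    set a := r / 2 with ha_def
    have ha : 0 < a := by positivity
    have hsub := integral_comp_rpow_Ioi_of_pos
      (g := fun s => s ^ (-(1:ℝ)/2) * Real.exp (-s - r ^ 2 / (4 * s))) two_pos
    rw [← hsub]
    have h : ∀ v ∈ Ioi (0:ℝ),
        (2 * v ^ ((2:ℝ) - 1)) • ((v ^ (2:ℝ)) ^ (-(1:ℝ)/2)
            * Real.exp (-(v ^ (2:ℝ)) - r ^ 2 / (4 * v ^ (2:ℝ))))
          = 2 * Real.exp (-v ^ 2 - a ^ 2 / v ^ 2) := by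
      intro v hv
      have hv0 : (0:ℝ) < v := hv
      have hv2 : v ^ (2:ℝ) = v ^ 2 := by
        rw [show (2:ℝ) = ((2:ℕ):ℝ) by norm_num, Real.rpow_natCast]
      have hpow : (v ^ 2 : ℝ) ^ (-(1:ℝ)/2) = v⁻¹ := by
        rw [← Real.rpow_natCast v 2, ← Real.rpow_mul hv0.le]
        norm_num [Real.rpow_neg_one]
      have hv1 : v ^ ((2:ℝ) - 1) = v := by
        norm_num
      have harg : r ^ 2 / (4 * v ^ 2) = a ^ 2 / v ^ 2 := by
        rw [ha_def]; ring
      rw [hv2, hv1, hpow, harg, smul_eq_mul]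
      field_simp
    rw [setIntegral_congr_fun measurableSet_Ioi h, integral_const_mul, lemD ha]
    have : 2 * a = r := by rw [ha_def]; ring
    rw [this]
    ring

private lemma inner_eq_sum_aux {n : ℕ} (x ξ : EuclideanSpace ℝ (Fin n)) :
    inner ℝ x ξ = ∑ j, x j * ξ j := by
  simp [PiLp.inner_apply, mul_comm]

private lemma gauss_step (n : ℕ) {t : ℝ} (ht : 0 < t) (x : EuclideanSpace ℝ (Fin n))
    {s : ℝ} (hs : 0 < s) :
    (∫ ξ : EuclideanSpace ℝ (Fin n),
        Complex.exp (-(((t ^ 2 / (4 * s)) : ℝ) : ℂ) * (‖ξ‖ : ℂ) ^ 2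
          + Complex.I * ((∑ j, x j * ξ j : ℝ) : ℂ)))
      = (((π / (t ^ 2 / (4 * s))) ^ ((n : ℝ) / 2)
          * Real.exp (-(s * ‖x‖ ^ 2 / t ^ 2)) : ℝ) : ℂ) := by
  have hb : (0:ℝ) < t ^ 2 / (4 * s) := by positivity
  have hbC : 0 < ((((t ^ 2 / (4 * s)) : ℝ)) : ℂ).re := by rw [Complex.ofReal_re]; exact hb
  have key := GaussianFourier.integral_cexp_neg_mul_sq_norm_add_of_euclideanSpace
    (b := (((t ^ 2 / (4 * s)) : ℝ) : ℂ)) hbC Complex.I x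
  have hlhs : (∫ ξ : EuclideanSpace ℝ (Fin n),
      Complex.exp (-(((t ^ 2 / (4 * s)) : ℝ) : ℂ) * (‖ξ‖ : ℂ) ^ 2
        + Complex.I * ((∑ j, x j * ξ j : ℝ) : ℂ)))
      = ∫ ξ : EuclideanSpace ℝ (Fin n),
          Complex.exp (-(((t ^ 2 / (4 * s)) : ℝ) : ℂ) * (‖ξ‖ : ℝ) ^ 2
            + Complex.I * ((inner ℝ x ξ : ℝ) : ℂ)) := by
    refine integral_congr_ae (Filter.Eventually.of_forall fun ξ => ?_)
    congr 1
    simp only [inner_eq_sum_aux]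
  rw [hlhs, key]
  have h1 : ((π : ℂ) / (((t ^ 2 / (4 * s)) : ℝ) : ℂ)) ^ ((Fintype.card (Fin n) : ℂ) / 2)
      = (((π / (t ^ 2 / (4 * s))) ^ ((n : ℝ) / 2) : ℝ) : ℂ) := by
    rw [← Complex.ofReal_div, Complex.ofReal_cpow (by positivity)]
    norm_num
  have h2 : Complex.exp (Complex.I ^ 2 * (‖x‖ : ℂ) ^ 2 / (4 * (((t ^ 2 / (4 * s)) : ℝ) : ℂ)))
      = ((Real.exp (-(s * ‖x‖ ^ 2 / t ^ 2)) : ℝ) : ℂ) := by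
    rw [Complex.I_sq, Complex.ofReal_exp]
    congr 1
    have hts : ((t ^ 2 / (4 * s) : ℝ) : ℂ) ≠ 0 := by
      simp only [ne_eq, Complex.ofReal_eq_zero]
      positivity
    have ht' : (t : ℂ) ≠ 0 := by exact_mod_cast ht.ne'
    have hs' : (s : ℂ) ≠ 0 := by exact_mod_cast hs.ne'
    push_cast
    field_simp
  rw [h1, h2, ← Complex.ofReal_mul]

end PoissonAux

theorem fourier_transform_exp_neg_norm (n : ℕ) (hn : 1 ≤ n) (t : ℝ) (ht : 0 < t)
    (x : EuclideanSpace ℝ (Fin n)) :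
    (2 * π : ℂ) ^ (-(n : ℂ) / 2) *
      ∫ ξ : EuclideanSpace ℝ (Fin n),
        Complex.exp (-(t : ℂ) * (‖ξ‖ : ℂ)) *
          Complex.exp (Complex.I * (∑ j, x j * ξ j : ℝ)) =
    ((2 : ℝ) ^ ((n : ℝ) / 2) * Real.Gamma ((n + 1) / 2) / Real.sqrt π *
      (t / (t ^ 2 + ‖x‖ ^ 2) ^ (((n : ℝ) + 1) / 2)) : ℝ) := by
  have hπ := Real.pi_pos
  have hsπ : (0:ℝ) < Real.sqrt π := Real.sqrt_pos.mpr hπ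
  have hA0 : (0:ℝ) ≤ ‖x‖ ^ 2 := sq_nonneg _
  have hb' : (0:ℝ) < 1 + ‖x‖ ^ 2 / t ^ 2 := by positivity
  -- Step A : pointwise subordination
  have stepA : ∀ ξ : EuclideanSpace ℝ (Fin n),
      Complex.exp (-(t:ℂ) * (‖ξ‖:ℂ)) * Complex.exp (Complex.I * ((∑ j, x j * ξ j : ℝ):ℂ))
      = (Real.sqrt π : ℂ)⁻¹ * ∫ s in Ioi (0:ℝ),
          ((s ^ (-(1:ℝ)/2) * Real.exp (-s) : ℝ) : ℂ) *
            Complex.exp (-(((t ^ 2 / (4 * s)) : ℝ) : ℂ) * (‖ξ‖:ℂ) ^ 2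
              + Complex.I * ((∑ j, x j * ξ j : ℝ):ℂ)) := by
    intro ξ
    have hr : 0 ≤ t * ‖ξ‖ := by positivity
    have hsub := subordination hr
    have h1 : Complex.exp (-(t:ℂ) * (‖ξ‖:ℂ)) = ((Real.exp (-(t * ‖ξ‖)) : ℝ) : ℂ) := by
      rw [Complex.ofReal_exp]
      push_cast
      ring_nf
    have h2 : Real.exp (-(t * ‖ξ‖)) = (Real.sqrt π)⁻¹ *
        ∫ s in Ioi (0:ℝ), s ^ (-(1:ℝ)/2) * Real.exp (-s - (t * ‖ξ‖) ^ 2 / (4 * s)) := by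
      rw [hsub]
      field_simp
    rw [h1, h2, Complex.ofReal_mul, Complex.ofReal_inv, mul_assoc]
    congr 1
    have hcast : ((∫ s in Ioi (0:ℝ), s ^ (-(1:ℝ)/2) *
          Real.exp (-s - (t * ‖ξ‖) ^ 2 / (4 * s)) : ℝ) : ℂ)
        = ∫ s in Ioi (0:ℝ), ((s ^ (-(1:ℝ)/2) *
            Real.exp (-s - (t * ‖ξ‖) ^ 2 / (4 * s)) : ℝ) : ℂ) :=
      integral_ofReal.symm
    rw [hcast, ← MeasureTheory.integral_mul_const]
    refine integral_congr_ae (Filter.Eventually.of_forall fun s => ?_)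
    simp only
    rw [Complex.ofReal_mul, Complex.ofReal_mul, mul_assoc, mul_assoc]
    congr 1
    rw [Complex.ofReal_exp, Complex.ofReal_exp, ← Complex.exp_add, ← Complex.exp_add]
    congr 1
    push_cast
    ring
  simp_rw [stepA]
  rw [MeasureTheory.integral_const_mul]
  -- Fubini
  have hmeas : AEStronglyMeasurable
      (Function.uncurry fun (ξ : EuclideanSpace ℝ (Fin n)) (s : ℝ) =>
        ((s ^ (-(1:ℝ)/2) * Real.exp (-s) : ℝ) : ℂ) *
          Complex.exp (-(((t ^ 2 / (4 * s)) : ℝ) : ℂ) * (‖ξ‖:ℂ) ^ 2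
            + Complex.I * ((∑ j, x j * ξ j : ℝ):ℂ)))
      (volume.prod (volume.restrict (Ioi 0))) := by
    apply Measurable.aestronglyMeasurable
    unfold Function.uncurry
    fun_prop
  have hInt : Integrable
      (Function.uncurry fun (ξ : EuclideanSpace ℝ (Fin n)) (s : ℝ) =>
        ((s ^ (-(1:ℝ)/2) * Real.exp (-s) : ℝ) : ℂ) *
          Complex.exp (-(((t ^ 2 / (4 * s)) : ℝ) : ℂ) * (‖ξ‖:ℂ) ^ 2
            + Complex.I * ((∑ j, x j * ξ j : ℝ):ℂ)))
      (volume.prod (volume.restrict (Ioi 0))) := by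
    refine (MeasureTheory.integrable_prod_iff' hmeas).mpr ⟨?_, ?_⟩
    · filter_upwards [ae_restrict_mem measurableSet_Ioi] with s hs
      have hs0 : (0:ℝ) < s := hs
      have hbC : 0 < ((((t ^ 2 / (4 * s)) : ℝ)) : ℂ).re := by
        rw [Complex.ofReal_re]; positivity
      simp only [Function.uncurry_apply_pair]
      simpa only [inner_eq_sum_aux] using
        (GaussianFourier.integrable_cexp_neg_mul_sq_norm_add_of_euclideanSpace
        hbC Complex.I x).const_mul ((s ^ (-(1:ℝ)/2) * Real.exp (-s) : ℝ) : ℂ)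
    · have hGint : Integrable
          (fun s : ℝ => (4 * π / t ^ 2) ^ ((n:ℝ)/2) *
            (Real.exp (-s) * s ^ (((n:ℝ)+1)/2 - 1))) (volume.restrict (Ioi 0)) :=
        (Real.GammaIntegral_convergent (by positivity : (0:ℝ) < ((n:ℝ)+1)/2)).const_mul _
      refine hGint.congr ?_
      filter_upwards [ae_restrict_mem measurableSet_Ioi] with s hs
      have hs0 : (0:ℝ) < s := hs
      simp only [Function.uncurry_apply_pair]
      have hnorm : ∀ ξ : EuclideanSpace ℝ (Fin n),
          ‖((s ^ (-(1:ℝ)/2) * Real.exp (-s) : ℝ) : ℂ) *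
            Complex.exp (-(((t ^ 2 / (4 * s)) : ℝ) : ℂ) * (‖ξ‖:ℂ) ^ 2
              + Complex.I * ((∑ j, x j * ξ j : ℝ):ℂ))‖
          = (s ^ (-(1:ℝ)/2) * Real.exp (-s)) *
              Real.exp (-(t ^ 2 / (4 * s)) * ‖ξ‖ ^ 2) := by
        intro ξ
        rw [show (-(((t ^ 2 / (4 * s)) : ℝ) : ℂ) * (‖ξ‖:ℂ) ^ 2
              + Complex.I * ((∑ j, x j * ξ j : ℝ):ℂ))
            = ((-(t ^ 2 / (4 * s)) * ‖ξ‖ ^ 2 : ℝ) : ℂ)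
              + ((∑ j, x j * ξ j : ℝ) : ℂ) * Complex.I from by push_cast; ring]
        have hre : ((((-(t ^ 2 / (4 * s)) * ‖ξ‖ ^ 2 : ℝ)) : ℂ)
            + ((∑ j, x j * ξ j : ℝ) : ℂ) * Complex.I).re
            = -(t ^ 2 / (4 * s)) * ‖ξ‖ ^ 2 := by
          rw [Complex.add_re, Complex.mul_I_re, Complex.ofReal_im, Complex.ofReal_re,
            neg_zero, add_zero]
        have hgpos : (0:ℝ) ≤ s ^ (-(1:ℝ)/2) * Real.exp (-s) := by positivity
        rw [norm_mul, Complex.norm_real, Real.norm_eq_abs,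
          Complex.norm_exp, abs_of_nonneg hgpos, hre]
      rw [MeasureTheory.integral_congr_ae (Filter.Eventually.of_forall hnorm)]
      rw [MeasureTheory.integral_const_mul,
        GaussianFourier.integral_rexp_neg_mul_sq_norm (by positivity : (0:ℝ) < t ^ 2 / (4 * s))]
      rw [finrank_euclideanSpace_fin]
      -- now a real identity
      have hpi : π / (t ^ 2 / (4 * s)) = (4 * π / t ^ 2) * s := by
        field_simp
      rw [hpi, Real.mul_rpow (by positivity) hs0.le]
      rw [show s ^ (-(1:ℝ)/2) * Real.exp (-s) * ((4 * π / t ^ 2) ^ ((n:ℝ)/2) * s ^ ((n:ℝ)/2))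
          = (4 * π / t ^ 2) ^ ((n:ℝ)/2) * (Real.exp (-s) * (s ^ (-(1:ℝ)/2) * s ^ ((n:ℝ)/2)))
          from by ring]
      rw [← Real.rpow_add hs0,
        show (-(1:ℝ)/2 + (n:ℝ)/2 : ℝ) = ((n:ℝ)+1)/2 - 1 from by ring]
  rw [MeasureTheory.integral_integral_swap hInt]
  -- evaluate the inner Gaussian integrals
  have stepC : ∫ s in Ioi (0:ℝ), (∫ ξ : EuclideanSpace ℝ (Fin n),
        ((s ^ (-(1:ℝ)/2) * Real.exp (-s) : ℝ) : ℂ) *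
          Complex.exp (-(((t ^ 2 / (4 * s)) : ℝ) : ℂ) * (‖ξ‖:ℂ) ^ 2
            + Complex.I * ((∑ j, x j * ξ j : ℝ):ℂ)))
      = ∫ s in Ioi (0:ℝ), ((((4 * π / t ^ 2) ^ ((n:ℝ)/2) *
          (s ^ (((n:ℝ)+1)/2 - 1) * Real.exp (-((1 + ‖x‖ ^ 2 / t ^ 2) * s))) : ℝ)) : ℂ) := by
    refine setIntegral_congr_fun measurableSet_Ioi (fun s hs => ?_)
    have hs0 : (0:ℝ) < s := hs
    rw [MeasureTheory.integral_const_mul, gauss_step n ht x hs0, ← Complex.ofReal_mul]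
    congr 1
    have hpi : π / (t ^ 2 / (4 * s)) = (4 * π / t ^ 2) * s := by
      field_simp
    rw [hpi, Real.mul_rpow (by positivity) hs0.le]
    rw [show s ^ (-(1:ℝ)/2) * Real.exp (-s) *
          ((4 * π / t ^ 2) ^ ((n:ℝ)/2) * s ^ ((n:ℝ)/2) * Real.exp (-(s * ‖x‖ ^ 2 / t ^ 2)))
        = (4 * π / t ^ 2) ^ ((n:ℝ)/2) * ((s ^ (-(1:ℝ)/2) * s ^ ((n:ℝ)/2)) *
            (Real.exp (-s) * Real.exp (-(s * ‖x‖ ^ 2 / t ^ 2)))) from by ring]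
    rw [← Real.rpow_add hs0, ← Real.exp_add,
      show (-(1:ℝ)/2 + (n:ℝ)/2 : ℝ) = ((n:ℝ)+1)/2 - 1 from by ring]
    congr 2
    field_simp
    ring
  have hofr : (∫ s in Ioi (0:ℝ), ((((4 * π / t ^ 2) ^ ((n:ℝ)/2) *
        (s ^ (((n:ℝ)+1)/2 - 1) * Real.exp (-((1 + ‖x‖ ^ 2 / t ^ 2) * s))) : ℝ)) : ℂ))
      = ((∫ s in Ioi (0:ℝ), (4 * π / t ^ 2) ^ ((n:ℝ)/2) *
          (s ^ (((n:ℝ)+1)/2 - 1) * Real.exp (-((1 + ‖x‖ ^ 2 / t ^ 2) * s))) : ℝ) : ℂ) :=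
    integral_ofReal
  rw [stepC, hofr]
  -- evaluate the Gamma integral
  have hgam := integral_rpow_mul_exp_neg_mul_rpow (p := 1) (q := ((n:ℝ)+1)/2 - 1)
    one_pos (by have h0 : (0:ℝ) ≤ (n:ℝ) := Nat.cast_nonneg n
                linarith : (-1:ℝ) < ((n:ℝ)+1)/2 - 1) hb'
  simp_rw [Real.rpow_one] at hgam
  have hq1 : ((n:ℝ)+1)/2 - 1 + 1 = ((n:ℝ)+1)/2 := by ring
  rw [hq1] at hgam
  have stepD : ∫ s in Ioi (0:ℝ), (4 * π / t ^ 2) ^ ((n:ℝ)/2) *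
      (s ^ (((n:ℝ)+1)/2 - 1) * Real.exp (-((1 + ‖x‖ ^ 2 / t ^ 2) * s)))
      = (4 * π / t ^ 2) ^ ((n:ℝ)/2) *
        ((1 + ‖x‖ ^ 2 / t ^ 2) ^ (-(((n:ℝ)+1)/2) / 1) * (1/1) * Real.Gamma ((((n:ℝ)+1)/2) / 1)) := by
    rw [MeasureTheory.integral_const_mul, ← hgam]
    congr 1
    refine setIntegral_congr_fun measurableSet_Ioi (fun s hs => ?_)
    rw [neg_mul]
  rw [stepD]
  norm_num
  -- final algebra
  rw [show (2 * π : ℂ) = (((2 * π : ℝ)) : ℂ) from by push_cast; ring]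
  rw [show (-(n:ℂ)/2) = (((-(n:ℝ)/2 : ℝ)) : ℂ) from by push_cast; ring]
  rw [← Complex.ofReal_cpow (by positivity) (-(n:ℝ)/2)]
  have final : (2 * π) ^ (-(n:ℝ)/2) * ((Real.sqrt π)⁻¹ * ((4 * π / t ^ 2) ^ ((n:ℝ)/2) *
        ((1 + ‖x‖ ^ 2 / t ^ 2) ^ (-(((n:ℝ)+1)/2)) * Real.Gamma (((n:ℝ)+1)/2))))
      = 2 ^ ((n:ℝ)/2) * Real.Gamma (((n:ℝ)+1)/2) / Real.sqrt π *
          (t / (t ^ 2 + ‖x‖ ^ 2) ^ (((n:ℝ)+1)/2)) := ?_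
  · exact_mod_cast final
  have hπ2 : (0:ℝ) < 2 * π := by linarith
  have hπ4 : (0:ℝ) < 4 * π := by linarith
  have ht2 : (0:ℝ) < t ^ 2 := by positivity
  have htA : (0:ℝ) < t ^ 2 + ‖x‖ ^ 2 := by positivity
  have key : (2 * π) ^ (-(n:ℝ)/2) * (4 * π / t ^ 2) ^ ((n:ℝ)/2)
      = 2 ^ ((n:ℝ)/2) * (t ^ 2) ^ (-((n:ℝ)/2)) := by
    rw [show (-(n:ℝ)/2) = -((n:ℝ)/2) from by ring,
      Real.rpow_neg hπ2.le, Real.div_rpow hπ4.le ht2.le,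
      show (4*π:ℝ) = 2*π*2 from by ring,
      Real.mul_rpow hπ2.le (by norm_num), Real.rpow_neg ht2.le]
    have e1 : ((2*π) ^ ((n:ℝ)/2)) ≠ 0 := (Real.rpow_pos_of_pos hπ2 _).ne'
    have e2 : ((t^2) ^ ((n:ℝ)/2)) ≠ 0 := (Real.rpow_pos_of_pos ht2 _).ne'
    field_simp
  have key2 : (1 + ‖x‖ ^ 2 / t ^ 2) ^ (-(((n:ℝ)+1)/2))
      = (t ^ 2) ^ (((n:ℝ)+1)/2) * (t ^ 2 + ‖x‖ ^ 2) ^ (-(((n:ℝ)+1)/2)) := by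
    rw [show (1 + ‖x‖ ^ 2 / t ^ 2 : ℝ) = (t ^ 2 + ‖x‖ ^ 2) / t ^ 2 from by field_simp,
      Real.div_rpow htA.le ht2.le, Real.rpow_neg htA.le, Real.rpow_neg ht2.le]
    have e1 : ((t^2) ^ (((n:ℝ)+1)/2)) ≠ 0 := (Real.rpow_pos_of_pos ht2 _).ne'
    have e2 : ((t^2+‖x‖^2) ^ (((n:ℝ)+1)/2)) ≠ 0 := (Real.rpow_pos_of_pos htA _).ne'
    field_simp
  have key3 : (t ^ 2) ^ (-((n:ℝ)/2)) * (t ^ 2) ^ (((n:ℝ)+1)/2) = t := by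
    rw [← Real.rpow_add ht2]
    rw [show -((n:ℝ)/2) + ((n:ℝ)+1)/2 = 1/2 from by ring]
    rw [show (t:ℝ) ^ 2 = t ^ ((2:ℕ):ℝ) from by rw [Real.rpow_natCast]]
    rw [← Real.rpow_mul ht.le]
    norm_num
  calc (2 * π) ^ (-(n:ℝ)/2) * ((Real.sqrt π)⁻¹ * ((4 * π / t ^ 2) ^ ((n:ℝ)/2) *
        ((1 + ‖x‖ ^ 2 / t ^ 2) ^ (-(((n:ℝ)+1)/2)) * Real.Gamma (((n:ℝ)+1)/2))))
      = ((2 * π) ^ (-(n:ℝ)/2) * (4 * π / t ^ 2) ^ ((n:ℝ)/2)) * (Real.sqrt π)⁻¹ *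
          ((1 + ‖x‖ ^ 2 / t ^ 2) ^ (-(((n:ℝ)+1)/2)) * Real.Gamma (((n:ℝ)+1)/2)) := by ring
    _ = 2 ^ ((n:ℝ)/2) * Real.Gamma (((n:ℝ)+1)/2) / Real.sqrt π *
          (((t ^ 2) ^ (-((n:ℝ)/2)) * (t ^ 2) ^ (((n:ℝ)+1)/2)) *
            (t ^ 2 + ‖x‖ ^ 2) ^ (-(((n:ℝ)+1)/2))) := by
        rw [key, key2]
        field_simp
    _ = 2 ^ ((n:ℝ)/2) * Real.Gamma (((n:ℝ)+1)/2) / Real.sqrt π *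
          (t / (t ^ 2 + ‖x‖ ^ 2) ^ (((n:ℝ)+1)/2)) := by
        rw [key3, Real.rpow_neg htA.le, div_eq_mul_inv]
        ring
end

section
/- Let n ≥ 1, α > 0, γ > 0, and let f: (0,∞) → (0,∞) be differentiable with f'(t) ≤ −α f(t)^{1+1/n} + γ f(t) for all t > 0. Then for all t > 0, f(t) ≤ (2n/α)^n e^{γ t/2} t^{-n}. -/
open Real Set

theorem nash_ode_comparison (n : ℕ) (hn : 1 ≤ n) (α γ : ℝ) (hα : 0 < α) (hγ : 0 < γ)
    (f f' : ℝ → ℝ) (hfpos : ∀ t, 0 < t → 0 < f t)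
    (hderiv : ∀ t, 0 < t → HasDerivAt f (f' t) t)
    (hineq : ∀ t, 0 < t → f' t ≤ -α * (f t) ^ ((1 : ℝ) + 1 / n) + γ * f t) :
    ∀ t, 0 < t → f t ≤ (2 * n / α) ^ (n : ℕ) * Real.exp (γ * t / 2) * t ^ (-(n : ℝ)) := by
  intro t ht
  set c : ℝ := (n : ℝ) with hc
  have hc1 : (1:ℝ) ≤ c := by rw [hc]; exact_mod_cast hn
  have hc0 : 0 < c := lt_of_lt_of_le one_pos hc1
  set h : ℝ → ℝ := fun s => Real.exp (γ / c * s) * f s ^ (-(1/c)) with hh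
  set h' : ℝ → ℝ := fun s => (γ/c) * Real.exp (γ/c*s) * f s ^ (-(1/c)) +
      Real.exp (γ/c*s) * (f' s * (-(1/c)) * f s ^ (-(1/c)-1)) with hh'
  have hD : ∀ s, 0 < s → HasDerivAt h (h' s) s := by
    intro s hs
    have h1 : HasDerivAt (fun s => Real.exp (γ/c*s)) ((γ/c) * Real.exp (γ/c*s)) s := by
      have := (Real.hasDerivAt_exp (γ/c*s)).comp s ((hasDerivAt_id s).const_mul (γ/c))
      simpa [Function.comp_def, mul_comm] using this
    have h2 : HasDerivAt (fun s => f s ^ (-(1/c))) (f' s * (-(1/c)) * f s ^ (-(1/c)-1)) s :=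
      (hderiv s hs).rpow_const (Or.inl (hfpos s hs).ne')
    simpa [hh, hh', Pi.mul_def] using h1.mul h2
  have hbound : ∀ s, 0 < s → α/c * Real.exp (γ/c*s) ≤ h' s := by
    intro s hs
    have hfs := hfpos s hs
    have hx1 : f s ^ ((1:ℝ) + 1/c) * f s ^ (-(1/c)-1) = 1 := by
      rw [← Real.rpow_add hfs, show (1:ℝ)+1/c + (-(1/c)-1) = 0 by ring, Real.rpow_zero]
    have hx2 : f s * f s ^ (-(1/c)-1) = f s ^ (-(1/c)) := by
      nth_rewrite 1 [← Real.rpow_one (f s)]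
      rw [← Real.rpow_add hfs]; ring_nf
    have hkey : α/c ≤ (γ/c) * f s ^ (-(1/c)) + f' s * (-(1/c)) * f s ^ (-(1/c)-1) := by
      have hle := hineq s hs
      have hpow : (0:ℝ) < f s ^ (-(1/c)-1) := Real.rpow_pos_of_pos hfs _
      have h4 : (-α * f s ^ ((1:ℝ) + 1/c) + γ * f s) * (-(1/c)) ≤ f' s * (-(1/c)) := by
        have hne : (-(1/c)) ≤ 0 := by
          simp only [neg_nonpos]; positivity
        exact mul_le_mul_of_nonpos_right hle hne
      have h3 : (-α * f s ^ ((1:ℝ) + 1/c) + γ * f s) * (-(1/c)) * f s ^ (-(1/c)-1)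
          ≤ f' s * (-(1/c)) * f s ^ (-(1/c)-1) :=
        mul_le_mul_of_nonneg_right h4 hpow.le
      have h5 : (-α * f s ^ ((1:ℝ) + 1/c) + γ * f s) * (-(1/c)) * f s ^ (-(1/c)-1)
          = α/c - (γ/c) * f s ^ (-(1/c)) := by
        have heq : (-α * f s ^ ((1:ℝ) + 1/c) + γ * f s) * (-(1/c)) * f s ^ (-(1/c)-1)
            = (α/c) * (f s ^ ((1:ℝ) + 1/c) * f s ^ (-(1/c)-1))
              - (γ/c) * (f s * f s ^ (-(1/c)-1)) := by ring
        rw [heq, hx1, hx2]; ring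
      rw [h5] at h3; linarith
    have hexp : (0:ℝ) < Real.exp (γ/c*s) := Real.exp_pos _
    have hm := mul_le_mul_of_nonneg_left hkey hexp.le
    calc α/c * Real.exp (γ/c*s) = Real.exp (γ/c*s) * (α/c) := by ring
      _ ≤ Real.exp (γ/c*s) * ((γ/c) * f s ^ (-(1/c)) + f' s * (-(1/c)) * f s ^ (-(1/c)-1)) := hm
      _ = h' s := by rw [hh']; ring
  set C : ℝ := α/c * Real.exp (γ/c * (t/2)) with hC
  have hcont : ContinuousOn h (Set.Icc (t/2) t) := fun x hx =>
    ((hD x (lt_of_lt_of_le (by linarith) hx.1)).continuousAt).continuousWithinAt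
  have hintr : interior (Set.Icc (t/2) t) = Set.Ioo (t/2) t := interior_Icc
  have hdiff : DifferentiableOn ℝ h (interior (Set.Icc (t/2) t)) := by
    rw [hintr]; intro x hx
    exact ((hD x (lt_trans (by linarith) hx.1)).differentiableAt).differentiableWithinAt
  have hge : ∀ x ∈ interior (Set.Icc (t/2) t), C ≤ deriv h x := by
    rw [hintr]; intro x hx
    have hx0 : 0 < x := lt_trans (by linarith) hx.1
    rw [(hD x hx0).deriv]
    refine le_trans ?_ (hbound x hx0)
    have hee : Real.exp (γ/c * (t/2)) ≤ Real.exp (γ/c * x) := by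
      apply Real.exp_le_exp.2
      have hle : t/2 ≤ x := hx.1.le
      have hγc : (0:ℝ) < γ/c := by positivity
      nlinarith
    have hαc : (0:ℝ) ≤ α/c := by positivity
    exact mul_le_mul_of_nonneg_left hee hαc
  have hmvt := (convex_Icc (t/2) t).mul_sub_le_image_sub_of_le_deriv hcont hdiff hge
    (t/2) (Set.mem_Icc.2 ⟨le_refl _, by linarith⟩) t (Set.mem_Icc.2 ⟨by linarith, le_refl _⟩)
    (by linarith)
  have hhalf : 0 < h (t/2) := by
    have hf2 : 0 < f (t/2) := hfpos _ (by linarith)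
    have : 0 < Real.exp (γ/c * (t/2)) * f (t/2) ^ (-(1/c)) := by positivity
    simpa [hh] using this
  have hht : C * (t/2) ≤ h t := by
    have ht2 : t - t/2 = t/2 := by ring
    rw [ht2] at hmvt; linarith
  set A : ℝ := α * t / (2*c) * Real.exp (-(γ*t)/(2*c)) with hA
  have hA0 : 0 < A := by positivity
  have hexp : (0:ℝ) < Real.exp (γ/c * t) := Real.exp_pos _
  have hAle : A ≤ f t ^ (-(1/c)) := by
    have key : A * Real.exp (γ/c*t) = C * (t/2) := by
      rw [hA, hC, mul_assoc, ← Real.exp_add]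
      have he : -(γ*t)/(2*c) + γ/c*t = γ/c * (t/2) := by field_simp; ring
      rw [he]; field_simp
    have h2 : h t = Real.exp (γ/c * t) * f t ^ (-(1/c)) := rfl
    rw [h2] at hht
    have : A * Real.exp (γ/c*t) ≤ f t ^ (-(1/c)) * Real.exp (γ/c*t) := by
      rw [key]; linarith
    exact le_of_mul_le_mul_right this hexp
  have hfin : f t ≤ A ^ (-c) := by
    have hmono := Real.rpow_le_rpow_of_nonpos hA0 hAle (neg_nonpos.2 hc0.le)
    have hl : (f t ^ (-(1/c))) ^ (-c) = f t := by
      rw [← Real.rpow_mul (hfpos t ht).le]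
      have : -(1/c) * -c = 1 := by field_simp
      rw [this, Real.rpow_one]
    rwa [hl] at hmono
  have hAeq : A ^ (-c) = (2*c/α)^(n:ℕ) * Real.exp (γ*t/2) * t ^ (-c) := by
    rw [hA, Real.mul_rpow (by positivity) (by positivity)]
    have e1 : Real.exp (-(γ*t)/(2*c)) ^ (-c) = Real.exp (γ*t/2) := by
      rw [← Real.exp_mul]
      congr 1; field_simp
    have e2 : (α*t/(2*c)) ^ (-c) = (2*c/α)^(n:ℕ) * t ^ (-c) := by
      rw [Real.rpow_neg (by positivity), ← Real.inv_rpow (by positivity), inv_div]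
      have hsplit : 2*c/(α*t) = (2*c/α) * t⁻¹ := by field_simp
      rw [hsplit, Real.mul_rpow (by positivity) (by positivity),
        Real.inv_rpow ht.le, ← Real.rpow_neg ht.le, Real.rpow_natCast]
    rw [e1, e2]; ring
  rw [hAeq] at hfin
  exact hfin
end
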